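/- Let G be a linearly ordered abelian group and let g_1, …, g_t ∈ G be elements that generate G as a group (i.e., every element of G is an integer linear combination α_1·g_1 + … + α_t·g_t with α_i ∈ ℤ). Then G has at most t Archimedean equivalence classes of nonzero elements; equivalently, among any t+1 nonzero elements of G, at least two are Archimedean equivalent. -/

import Mathlib

open Finset

private lemma stmt0_small_sum {G : Type*} [AddCommGroup G] [LinearOrder G] [IsOrderedAddMonoid G] {ι : Type*} [DecidableEq ι]
    {b : G} (hb : 0 < b) (T : Finset ι) (a : ι → G)
    (h : ∀ i ∈ T, ∀ n : ℕ, n • a i < b) : ∀ n : ℕ, n • (∑ i ∈ T, a i) < b := by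
  induction T using Finset.induction with
  | empty => intro n; simpa using hb
  | @insert y T hy ih =>
    intro n
    have hs : ∀ n : ℕ, n • (∑ i ∈ T, a i) < b :=
      ih fun i hi => h i (Finset.mem_insert_of_mem hi)
    have hay : ∀ n : ℕ, n • a y < b := h y (Finset.mem_insert_self _ _)
    rw [Finset.sum_insert hy]
    set s := ∑ i ∈ T, a i
    have h1 : n • (a y + s) ≤ (n + n) • (max (a y) s) := by
      rw [smul_add, add_nsmul]
      exact add_le_add (nsmul_le_nsmul_right (le_max_left _ _) n)
        (nsmul_le_nsmul_right (le_max_right _ _) n)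
    rcases max_choice (a y) s with hm | hm
    · exact h1.trans_lt (by rw [hm]; exact hay _)
    · exact h1.trans_lt (by rw [hm]; exact hs _)

/-- Let `G` be a linearly ordered abelian group generated (as a group)
by `g 0, …, g (t-1)`.  Then among any `t + 1` nonzero elements of `G`, at least two are
Archimedean equivalent, i.e. `G` has at most `t` Archimedean equivalence classes of
nonzero elements.  Here `x` and `y` are Archimedean equivalent when there are naturals
`m, n` with `|x| ≤ n • |y|` and `|y| ≤ m • |x|`. -/
theorem stmt0 {G : Type*} [AddCommGroup G] [LinearOrder G] [IsOrderedAddMonoid G] {t : ℕ}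
    (g : Fin t → G) (hgen : ∀ x : G, ∃ α : Fin t → ℤ, x = ∑ i, α i • g i)
    (x : Fin (t + 1) → G) (hx : ∀ i, x i ≠ 0) :
    ∃ i j : Fin (t + 1), i ≠ j ∧
      ∃ m n : ℕ, |x i| ≤ n • |x j| ∧ |x j| ≤ m • |x i| := by
  classical
  by_contra hcon
  push_neg at hcon
  choose α hα using hgen
  set A : Fin (t + 1) → Fin t → ℤ := fun i => α (x i) with hA
  have hxA : ∀ i, x i = ∑ k, A i k • g k := fun i => hα (x i)
  -- the rows as rational vectors are linearly dependent
  set v : Fin (t + 1) → (Fin t → ℚ) := fun i k => (A i k : ℚ) with hv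
  have hnotli : ¬ LinearIndependent ℤ v := by
    rw [LinearIndependent.iff_fractionRing ℤ ℚ]
    intro hli
    have := hli.fintype_card_le_finrank
    simp [Module.finrank_pi] at this
  obtain ⟨c, hcsum, j0, hj0⟩ := Fintype.not_linearIndependent_iff.mp hnotli
  -- integer linear relation among the x i
  have hrel : ∑ i, c i • x i = 0 := by
    have hk : ∀ k : Fin t, ∑ i, c i * A i k = 0 := by
      intro k
      have := congrFun hcsum k
      have h2 : ((∑ i, c i * A i k : ℤ) : ℚ) = 0 := by
        push_cast
        simpa [hv, zsmul_eq_mul] using this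
      exact_mod_cast h2
    calc ∑ i, c i • x i = ∑ i, ∑ k, (c i * A i k) • g k := by
          refine Finset.sum_congr rfl fun i _ => ?_
          rw [hxA i, Finset.smul_sum]
          exact Finset.sum_congr rfl fun k _ => (mul_smul _ _ _).symm
      _ = ∑ k, (∑ i, c i * A i k) • g k := by
          rw [Finset.sum_comm]
          exact Finset.sum_congr rfl fun k _ => (Finset.sum_smul).symm
      _ = 0 := by simp [hk]
  -- support of c
  set S : Finset (Fin (t + 1)) := Finset.univ.filter (fun i => c i ≠ 0) with hS
  have hSne : S.Nonempty := ⟨j0, by simp [hS, hj0]⟩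
  obtain ⟨j, hjS, hjmax⟩ := S.exists_max_image (fun i => |x i|) hSne
  have hcj : c j ≠ 0 := (Finset.mem_filter.mp hjS).2
  have hxjpos : 0 < |x j| := abs_pos.mpr (hx j)
  -- all other support elements are infinitesimal w.r.t. x j
  have hsmall : ∀ i ∈ S.erase j, ∀ n : ℕ, n • |x i| < |x j| := by
    intro i hi n
    have hij : i ≠ j := (Finset.mem_erase.mp hi).1
    have hiS : i ∈ S := (Finset.mem_erase.mp hi).2
    exact hcon i j hij n 1 (by simpa using hjmax i hiS)
  -- the relation restricted to S
  have hrelS : ∑ i ∈ S, c i • x i = 0 := by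
    have h := Finset.sum_filter_of_ne (s := Finset.univ) (f := fun i => c i • x i)
      (p := fun i => c i ≠ 0) (fun i _ hf hc => hf (by simp [hc]))
    rw [hS]
    exact h.trans hrel
  -- split off the j-th term
  have hsplit : c j • x j = -∑ i ∈ S.erase j, c i • x i := by
    rw [← Finset.add_sum_erase S _ hjS] at hrelS
    exact eq_neg_of_add_eq_zero_left hrelS
  have habs : |x j| ≤ ∑ i ∈ S.erase j, |c i • x i| := by
    have h1 : |x j| ≤ |c j • x j| := by
      rw [abs_zsmul]
      have h0 : (0 : G) ≤ (|c j| - 1) • |x j| :=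
        zsmul_nonneg (abs_nonneg _) (by have := Int.one_le_abs hcj; omega)
      rw [sub_smul, one_smul] at h0
      have := sub_nonneg.mp h0
      simpa using this
    calc |x j| ≤ |c j • x j| := h1
      _ = |∑ i ∈ S.erase j, c i • x i| := by rw [hsplit, abs_neg]
      _ ≤ ∑ i ∈ S.erase j, |c i • x i| := Finset.abs_sum_le_sum_abs _ _
  have hterm : ∀ i ∈ S.erase j, ∀ n : ℕ, n • |c i • x i| < |x j| := by
    intro i hi n
    rw [abs_zsmul, Int.abs_eq_natAbs, natCast_zsmul, ← mul_nsmul]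
    exact hsmall i hi _
  have hfin := stmt0_small_sum hxjpos (S.erase j) (fun i => |c i • x i|) hterm 1
  rw [one_nsmul] at hfin
  exact absurd habs hfin.not_ge
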